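/- For every n ∈ ℕ: the function D_n is nonincreasing on ℝ (x ≤ y implies D_n(y) ≤ D_n(x)); D_n(x) = 1 for all x ≤ 0; D_n(x) = 0 for all x > n; and D_n is continuous at every point x ∈ ℝ with x ≠ n. -/

import Mathlib

set_option linter.unusedSectionVars false
set_option maxHeartbeats 1000000

open Classical in
/-- The recursively defined functions `D n : ℝ → ℝ`. -/
noncomputable def D : ℕ → ℝ → ℝ
  | 0, x => if x ≤ 0 then 1 else 0
  | n + 1, x =>
    if x ≤ 0 then 1
    else if ((n : ℝ) + 1) < x then 0
    else if ∃ m : ℤ, x = (m : ℝ) then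
      (1 / 2) * D n (x - 1) + (1 / 2) * D n (x + 1)
    else if Odd n ∧ x < 1 then
      (1 - x) * D n 0 + x * D n 1
    else if Even (⌊x⌋ + (n : ℤ)) then
      (1 / (1 + Int.fract x)) * D n (⌊x⌋ : ℝ)
        + (Int.fract x / (1 + Int.fract x)) * D n (x + 1)
    else
      ((1 - Int.fract x) / (2 - Int.fract x)) * D n (x - 1)
        + (1 / (2 - Int.fract x)) * D n (⌈x⌉ : ℝ)


lemma D_of_nonpos (n : ℕ) {x : ℝ} (hx : x ≤ 0) : D n x = 1 := by
  cases n <;> simp [D, hx]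

lemma D_of_gt : ∀ (n : ℕ) {x : ℝ}, (n : ℝ) < x → D n x = 0 := by
  intro n x hx
  cases n with
  | zero => rw [D, if_neg (by simpa using not_le.2 hx)]
  | succ n =>
    rw [D, if_neg (by push_cast at hx ⊢; linarith), if_pos (by push_cast at hx ⊢; linarith)]

lemma D_nat (n m : ℕ) (h1 : 1 ≤ m) (h2 : m ≤ n + 1) :
    D (n+1) (m:ℝ) = (1/2) * D n ((m:ℝ) - 1) + (1/2) * D n ((m:ℝ) + 1) := by
  have hm0 : (0:ℝ) < m := by exact_mod_cast h1
  rw [D, if_neg (by linarith), if_neg (by exact_mod_cast not_lt.2 (by exact_mod_cast h2 : (m:ℝ) ≤ (n:ℝ)+1)), if_pos ⟨(m:ℤ), by push_cast; ring⟩]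

lemma D_nonneg : ∀ (n : ℕ) (x : ℝ), 0 ≤ D n x := by
  intro n
  induction n with
  | zero => intro x; rw [D]; split <;> norm_num
  | succ n ih =>
    intro x
    rw [D]
    split
    · norm_num
    split
    · norm_num
    have hx0 : (0:ℝ) < x := by linarith [not_le.1 ‹¬ x ≤ 0›]
    split
    · exact add_nonneg (mul_nonneg (by norm_num) (ih _)) (mul_nonneg (by norm_num) (ih _))
    split
    · rename_i h
      exact add_nonneg (mul_nonneg (by linarith [h.2]) (ih _)) (mul_nonneg hx0.le (ih _))
    have hf0 : 0 ≤ Int.fract x := Int.fract_nonneg x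
    have hf1 : Int.fract x < 1 := Int.fract_lt_one x
    split
    · exact add_nonneg (mul_nonneg (by positivity) (ih _))
        (mul_nonneg (div_nonneg hf0 (by linarith)) (ih _))
    · have h2 : (0:ℝ) < 2 - Int.fract x := by linarith
      exact add_nonneg (mul_nonneg (div_nonneg (by linarith) h2.le) (ih _))
        (mul_nonneg (div_nonneg (by norm_num) h2.le) (ih _))



lemma D_succ_nat : ∀ (n m : ℕ), 1 ≤ m → Even (m + n) → D (n+1) (m:ℝ) = D n (m:ℝ) := by
  intro n
  induction n with
  | zero =>
    intro m h1 he
    have h2 : 2 ≤ m := by rcases he with ⟨r, hr⟩; omega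
    rw [D_of_gt 1 (by exact_mod_cast (by omega : 1 < m)),
        D_of_gt 0 (by exact_mod_cast (by omega : 0 < m))]
  | succ n ih =>
    intro m h1 he
    by_cases hm : m ≤ n + 2
    · have hm' : m ≤ n + 1 := by rcases he with ⟨r, hr⟩; omega
      rw [D_nat (n+1) m h1 (by omega), D_nat n m h1 hm']
      obtain ⟨m', rfl⟩ : ∃ m', m = m' + 1 := ⟨m - 1, by omega⟩
      have e1 : ((m' + 1 : ℕ) : ℝ) - 1 = ((m' : ℕ) : ℝ) := by push_cast; ring
      have e2 : ((m' + 1 : ℕ) : ℝ) + 1 = ((m' + 2 : ℕ) : ℝ) := by push_cast; ring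
      rw [e1, e2]
      congr 1
      · by_cases h0 : m' = 0
        · subst h0; norm_num [D_of_nonpos]
        · rw [ih m' (by omega) (by rcases he with ⟨r, hr⟩; exact ⟨r - 1, by omega⟩)]
      · rw [ih (m' + 2) (by omega) (by rcases he with ⟨r, hr⟩; exact ⟨r, by omega⟩)]
    · rw [D_of_gt (n+2) (by exact_mod_cast (by omega : n + 2 < m)),
          D_of_gt (n+1) (by exact_mod_cast (by omega : n + 1 < m))]


open Set

lemma floor_eq_of_Ioo {k : ℕ} {x : ℝ} (h1 : (k:ℝ) < x) (h2 : x < (k:ℝ)+1) : ⌊x⌋ = (k:ℤ) := by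
  rw [Int.floor_eq_iff]
  constructor
  · exact_mod_cast h1.le
  · exact_mod_cast h2

lemma not_int_of_Ioo {k : ℕ} {x : ℝ} (h1 : (k:ℝ) < x) (h2 : x < (k:ℝ)+1) :
    ¬ ∃ m : ℤ, x = (m : ℝ) := by
  rintro ⟨m, rfl⟩
  have l1 : (k:ℤ) < m := by exact_mod_cast h1
  have l2 : m < (k:ℤ) + 1 := by exact_mod_cast h2
  omega

lemma D_eqE (n k : ℕ) (hk : k ≤ n) (hpar : Even (k + n)) :
    Set.EqOn (D (n+1))
      (fun x => (1 / (1 + (x - (k:ℝ)))) * D n (k:ℝ) + ((x - (k:ℝ)) / (1 + (x - (k:ℝ)))) * D n (x + 1))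
      (Set.Icc (k:ℝ) ((k:ℝ)+1)) := by
  intro x hx
  obtain ⟨hx1, hx2⟩ := hx
  rcases eq_or_lt_of_le hx1 with h | h1
  · -- x = k
    simp only [← h, sub_self, zero_div, zero_mul, add_zero, add_zero, div_self, one_mul]
    norm_num
    by_cases h0 : k = 0
    · subst h0; rw [D_of_nonpos (n+1) (by norm_num), D_of_nonpos n (by norm_num)]
    · exact D_succ_nat n k (by omega) hpar
  rcases eq_or_lt_of_le hx2 with h2 | h2
  · -- x = k + 1
    have e1 : ((k:ℝ)+1) - 1 = (k:ℝ) := by ring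
    have hcast : ((k+1:ℕ):ℝ) = (k:ℝ)+1 := by push_cast; ring
    subst h2
    simp only
    rw [show ((k:ℝ)+1) = ((k+1:ℕ):ℝ) from hcast.symm, D_nat n (k+1) (by omega) (by omega)]
    rw [hcast, e1]
    norm_num
  · -- interior
    have h0 : ¬ (x ≤ 0) := by
      have : (0:ℝ) ≤ (k:ℝ) := by positivity
      linarith
    have hn1 : ¬ ((n:ℝ) + 1 < x) := by
      have : (k:ℝ) + 1 ≤ (n:ℝ) + 1 := by
        have : (k:ℝ) ≤ (n:ℝ) := by exact_mod_cast hk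
        linarith
      linarith
    have hni := not_int_of_Ioo h1 h2
    have hfl := floor_eq_of_Ioo h1 h2
    have hodd : ¬ (Odd n ∧ x < 1) := by
      rintro ⟨hodd, hlt1⟩
      have : k = 0 := by
        by_contra hkk
        have : (1:ℝ) ≤ (k:ℝ) := by exact_mod_cast Nat.one_le_iff_ne_zero.2 hkk
        linarith
      subst this
      simp only [Nat.zero_add] at hpar
      exact (Nat.not_even_iff_odd.2 hodd) hpar
    have hpar' : Even (⌊x⌋ + (n:ℤ)) := by
      rw [hfl]
      have : ((k:ℤ) + (n:ℤ)) = ((k + n : ℕ) : ℤ) := by push_cast; ring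
      rw [this]
      exact Int.even_coe_nat _ |>.2 hpar
    rw [D, if_neg h0, if_neg hn1, if_neg hni, if_neg hodd, if_pos hpar']
    rw [Int.fract, hfl]
    norm_num

lemma D_eqO (n k : ℕ) (hk1 : 1 ≤ k) (hk : k ≤ n) (hpar : ¬ Even (k + n)) :
    Set.EqOn (D (n+1))
      (fun x => ((1 - (x - (k:ℝ))) / (2 - (x - (k:ℝ)))) * D n (x - 1)
        + (1 / (2 - (x - (k:ℝ)))) * D n ((k:ℝ) + 1))
      (Set.Icc (k:ℝ) ((k:ℝ)+1)) := by
  intro x hx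
  obtain ⟨hx1, hx2⟩ := hx
  rcases eq_or_lt_of_le hx1 with h | h1
  · -- x = k
    rw [← h]
    simp only [sub_self]
    rw [show (k:ℝ) = ((k:ℕ):ℝ) from rfl, D_nat n k (by omega) (by omega)]
    norm_num
  rcases eq_or_lt_of_le hx2 with h2 | h2
  · -- x = k+1
    subst h2
    simp only
    have hcast : ((k+1:ℕ):ℝ) = (k:ℝ)+1 := by push_cast; ring
    rw [show ((k:ℝ)+1) = ((k+1:ℕ):ℝ) from hcast.symm,
      D_succ_nat n (k+1) (by omega) (by rw [show k+1+n = k+n+1 by omega]; exact Nat.even_add_one.2 hpar)]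
    rw [hcast]
    norm_num
  · -- interior
    have h0 : ¬ (x ≤ 0) := by
      have : (0:ℝ) ≤ (k:ℝ) := by positivity
      linarith
    have hn1 : ¬ ((n:ℝ) + 1 < x) := by
      have : (k:ℝ) ≤ (n:ℝ) := by exact_mod_cast hk
      linarith
    have hni := not_int_of_Ioo h1 h2
    have hfl := floor_eq_of_Ioo h1 h2
    have hodd : ¬ (Odd n ∧ x < 1) := by
      rintro ⟨-, hlt1⟩
      have : (1:ℝ) ≤ (k:ℝ) := by exact_mod_cast hk1
      linarith
    have hpar' : ¬ Even (⌊x⌋ + (n:ℤ)) := by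
      rw [hfl]
      have e : ((k:ℤ) + (n:ℤ)) = ((k + n : ℕ) : ℤ) := by push_cast; ring
      rw [e]
      exact fun hc => hpar (Int.even_coe_nat _ |>.1 hc)
    have hceil : ⌈x⌉ = (k:ℤ) + 1 := by
      rw [Int.ceil_eq_iff]
      constructor
      · push_cast; linarith
      · push_cast; linarith
    rw [D, if_neg h0, if_neg hn1, if_neg hni, if_neg hodd, if_neg hpar']
    rw [Int.fract, hfl, hceil]
    push_cast
    ring_nf

lemma D_eqL (n : ℕ) (hn : Odd n) :
    Set.EqOn (D (n+1)) (fun x => (1 - x) * 1 + x * D n 1) (Set.Icc (0:ℝ) 1) := by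
  intro x hx
  obtain ⟨hx1, hx2⟩ := hx
  rcases eq_or_lt_of_le hx1 with h | h1
  · rw [← h, D_of_nonpos (n+1) le_rfl]; norm_num
  rcases eq_or_lt_of_le hx2 with h2 | h2
  · subst h2
    simp only
    rw [show (1:ℝ) = ((1:ℕ):ℝ) by norm_num,
      D_succ_nat n 1 le_rfl (by rw [show 1+n = n+1 by omega]; exact hn.add_one)]
    norm_num
  · have h0 : ¬ (x ≤ 0) := not_le.2 h1
    have hn1 : ¬ ((n:ℝ) + 1 < x) := by
      have : (0:ℝ) ≤ (n:ℝ) := by positivity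
      linarith
    have hni : ¬ ∃ m : ℤ, x = (m : ℝ) := by
      have := @not_int_of_Ioo 0 x (by exact_mod_cast h1) (by push_cast; linarith)
      exact this
    rw [D, if_neg h0, if_neg hn1, if_neg hni, if_pos ⟨hn, h2⟩, D_of_nonpos n le_rfl]


open Set

section Piece
variable {n : ℕ}
  (hanti : ∀ x y : ℝ, x ≤ y → D n y ≤ D n x)
  (hcont : ∀ x : ℝ, x ≠ (n:ℝ) → ContinuousAt (D n) x)
  (hleft : ∀ x : ℝ, ContinuousWithinAt (D n) (Set.Iic x) x)

include hanti hcont hleft in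
-- continuity of x ↦ D n (x + 1) on Icc k (k+1), assuming n ≠ k+1
lemma cont_shift (k : ℕ) (hne : n ≠ k + 1) :
    ContinuousOn (fun x => D n (x + 1)) (Icc (k:ℝ) ((k:ℝ)+1)) := by
  intro x hx
  rcases eq_or_lt_of_le hx.2 with h2 | h2
  · -- x = k+1 : use left continuity at x+1
    have hmap : MapsTo (fun y : ℝ => y + 1) (Icc (k:ℝ) ((k:ℝ)+1)) (Iic (x+1)) := by
      intro y hy
      simp only [mem_Iic]
      have := hy.2
      linarith [h2.symm.le]
    have hc : ContinuousWithinAt (D n ∘ (fun y : ℝ => y + 1)) (Icc (k:ℝ) ((k:ℝ)+1)) x :=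
      ContinuousWithinAt.comp (by rw [show x + 1 = (k:ℝ)+1+1 by rw [h2]] at *; exact hleft _)
        (continuous_add_right (1:ℝ)).continuousWithinAt hmap
    exact hc
  · -- x < k+1 : x+1 ≠ n
    have hne' : x + 1 ≠ (n:ℝ) := by
      intro h
      rcases eq_or_lt_of_le hx.1 with h1 | h1
      · -- x = k : n = k+1
        apply hne
        have : ((n:ℝ)) = (k:ℝ) + 1 := by rw [← h, ← h1]
        exact_mod_cast this
      · -- x not integer: n ∈ (k+1, k+2) impossible
        have l1 : ((k:ℝ)) + 1 < (n:ℝ) := by linarith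
        have l2 : ((n:ℝ)) < (k:ℝ) + 2 := by linarith
        have l1' : k + 1 < n := by exact_mod_cast l1
        have l2' : n < k + 2 := by exact_mod_cast l2
        omega
    have hc : ContinuousAt (D n ∘ (fun y : ℝ => y + 1)) x :=
      ContinuousAt.comp (hcont (x+1) hne') (continuous_add_right (1:ℝ)).continuousAt
    exact hc.continuousWithinAt

include hanti hcont hleft in
-- continuity of x ↦ D n (x - 1) on Icc k (k+1), assuming n ∉ {k-1, k} ... we need n ≠ k and n ≠ k - 1;
-- in our use k ≤ n and n ≠ k suffice.
lemma cont_shift' (k : ℕ) (hk : k ≤ n) (hne : n ≠ k) :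
    ContinuousOn (fun x => D n (x - 1)) (Icc (k:ℝ) ((k:ℝ)+1)) := by
  intro x hx
  have hne' : x - 1 ≠ (n:ℝ) := by
    intro h
    have : (n:ℝ) ≤ x - 1 + 1 - 1 := by rw [h]; ring_nf; linarith
    have hkn : (k:ℝ) ≤ (n:ℝ) := by exact_mod_cast hk
    have h1 := hx.1
    have h2 := hx.2
    -- n = x - 1 ∈ [k-1, k] and n ≥ k so n = k, x = k+1
    have : (n:ℝ) = (k:ℝ) := le_antisymm (by linarith) hkn
    exact hne (by exact_mod_cast this)
  have hc : ContinuousAt (D n ∘ (fun y : ℝ => y - 1)) x :=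
    ContinuousAt.comp (hcont (x-1) hne') (continuous_sub_right (1:ℝ)).continuousAt
  exact hc.continuousWithinAt

end Piece

section Piece2
variable {n : ℕ}
  (hanti : ∀ x y : ℝ, x ≤ y → D n y ≤ D n x)
  (hcont : ∀ x : ℝ, x ≠ (n:ℝ) → ContinuousAt (D n) x)
  (hleft : ∀ x : ℝ, ContinuousWithinAt (D n) (Set.Iic x) x)

set_option maxHeartbeats 1000000 in
include hanti hcont hleft in
lemma D_piece (k : ℕ) (hk : k ≤ n) :
    ContinuousOn (D (n+1)) (Icc (k:ℝ) ((k:ℝ)+1)) ∧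
      AntitoneOn (D (n+1)) (Icc (k:ℝ) ((k:ℝ)+1)) := by
  by_cases hpar : Even (k + n)
  · -- even piece
    have hEq := D_eqE n k hk hpar
    have hne : n ≠ k + 1 := by
      rintro rfl
      rcases hpar with ⟨r, hr⟩; omega
    have hdenne : ∀ x ∈ Icc (k:ℝ) ((k:ℝ)+1), 1 + (x - (k:ℝ)) ≠ 0 := by
      intro x hx; have := hx.1; intro h; linarith
    have hC : ContinuousOn
        (fun x => (1 / (1 + (x - (k:ℝ)))) * D n (k:ℝ)
          + ((x - (k:ℝ)) / (1 + (x - (k:ℝ)))) * D n (x + 1))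
        (Icc (k:ℝ) ((k:ℝ)+1)) := by
      apply ContinuousOn.add
      · exact (ContinuousOn.div continuousOn_const (by fun_prop) hdenne).mul continuousOn_const
      · exact (ContinuousOn.div (by fun_prop) (by fun_prop) hdenne).mul
          (cont_shift hanti hcont hleft k hne)
    have hA : AntitoneOn
        (fun x => (1 / (1 + (x - (k:ℝ)))) * D n (k:ℝ)
          + ((x - (k:ℝ)) / (1 + (x - (k:ℝ)))) * D n (x + 1))
        (Icc (k:ℝ) ((k:ℝ)+1)) := by
      intro x hx y hy hxy
      simp only
      have hx0 : 0 ≤ x - (k:ℝ) := sub_nonneg.2 hx.1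
      have hy0 : 0 ≤ y - (k:ℝ) := sub_nonneg.2 hy.1
      have hdx : (0:ℝ) < 1 + (x - k) := by linarith
      have hdy : (0:ℝ) < 1 + (y - k) := by linarith
      have idx : (1/(1+(x-(k:ℝ)))) * D n k + ((x-k)/(1+(x-k))) * D n (x+1)
          = D n k + ((x-k)/(1+(x-k))) * (D n (x+1) - D n k) := by
        field_simp; ring
      have idy : (1/(1+(y-(k:ℝ)))) * D n k + ((y-k)/(1+(y-k))) * D n (y+1)
          = D n k + ((y-k)/(1+(y-k))) * (D n (y+1) - D n k) := by
        field_simp; ring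
      rw [idx, idy]
      have ha1 : (x-(k:ℝ))/(1+(x-k)) ≤ (y-k)/(1+(y-k)) := by
        rw [div_le_div_iff₀ hdx hdy]; nlinarith
      have hgx : D n (x+1) - D n (k:ℝ) ≤ 0 :=
        sub_nonpos.2 (hanti _ _ (by linarith))
      have hgy : D n (y+1) - D n (k:ℝ) ≤ D n (x+1) - D n k :=
        sub_le_sub_right (hanti _ _ (by linarith)) _
      have t1 : ((y-(k:ℝ))/(1+(y-k))) * (D n (y+1) - D n k)
          ≤ ((y-k)/(1+(y-k))) * (D n (x+1) - D n k) :=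
        mul_le_mul_of_nonneg_left hgy (div_nonneg hy0 hdy.le)
      have t2 : ((y-(k:ℝ))/(1+(y-k))) * (D n (x+1) - D n k)
          ≤ ((x-k)/(1+(x-k))) * (D n (x+1) - D n k) :=
        mul_le_mul_of_nonpos_right ha1 hgx
      linarith
    exact ⟨hC.congr hEq, fun x hx y hy hxy => by
      rw [hEq hx, hEq hy]; exact hA hx hy hxy⟩
  · by_cases hk0 : k = 0
    · -- linear piece, n odd
      subst hk0
      have hodd : Odd n := Nat.odd_iff.2 (by
        rcases Nat.even_or_odd n with h | h
        · exact absurd (by simpa using h) hpar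
        · exact Nat.odd_iff.1 h)
      have hEq := D_eqL n hodd
      have hset : Icc ((0:ℕ):ℝ) (((0:ℕ):ℝ)+1) = Icc (0:ℝ) 1 := by norm_num
      rw [hset]
      have hone : D n 1 ≤ 1 := by
        have := hanti 0 1 (by norm_num)
        rwa [D_of_nonpos n le_rfl] at this
      have hA : AntitoneOn (fun x : ℝ => (1 - x) * 1 + x * D n 1) (Icc (0:ℝ) 1) := by
        intro x hx y hy hxy
        simp only
        nlinarith
      exact ⟨(by fun_prop : ContinuousOn (fun x : ℝ => (1 - x) * 1 + x * D n 1) _).congr hEq,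
        fun x hx y hy hxy => by rw [hEq hx, hEq hy]; exact hA hx hy hxy⟩
    · -- odd piece, k ≥ 1
      have hk1 : 1 ≤ k := Nat.one_le_iff_ne_zero.2 hk0
      have hEq := D_eqO n k hk1 hk hpar
      have hne : n ≠ k := by
        rintro rfl
        exact hpar ⟨n, rfl⟩
      have hdenne : ∀ x ∈ Icc (k:ℝ) ((k:ℝ)+1), 2 - (x - (k:ℝ)) ≠ 0 := by
        intro x hx; have := hx.2; intro h; linarith
      have hC : ContinuousOn
          (fun x => ((1 - (x - (k:ℝ))) / (2 - (x - (k:ℝ)))) * D n (x - 1)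
            + (1 / (2 - (x - (k:ℝ)))) * D n ((k:ℝ) + 1))
          (Icc (k:ℝ) ((k:ℝ)+1)) := by
        apply ContinuousOn.add
        · exact (ContinuousOn.div (by fun_prop) (by fun_prop) hdenne).mul
            (cont_shift' hanti hcont hleft k hk hne)
        · exact (ContinuousOn.div continuousOn_const (by fun_prop) hdenne).mul continuousOn_const
      have hA : AntitoneOn
          (fun x => ((1 - (x - (k:ℝ))) / (2 - (x - (k:ℝ)))) * D n (x - 1)
            + (1 / (2 - (x - (k:ℝ)))) * D n ((k:ℝ) + 1))
          (Icc (k:ℝ) ((k:ℝ)+1)) := by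
        intro x hx y hy hxy
        simp only
        have hx0 : 0 ≤ x - (k:ℝ) := sub_nonneg.2 hx.1
        have hy0 : 0 ≤ y - (k:ℝ) := sub_nonneg.2 hy.1
        have hx1 : x - (k:ℝ) ≤ 1 := by linarith [hx.2]
        have hy1 : y - (k:ℝ) ≤ 1 := by linarith [hy.2]
        have hdx : (0:ℝ) < 2 - (x - k) := by linarith
        have hdy : (0:ℝ) < 2 - (y - k) := by linarith
        have idx : ((1-(x-(k:ℝ)))/(2-(x-k))) * D n (x-1) + (1/(2-(x-k))) * D n ((k:ℝ)+1)
            = D n ((k:ℝ)+1) + ((1-(x-k))/(2-(x-k))) * (D n (x-1) - D n ((k:ℝ)+1)) := by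
          field_simp; ring
        have idy : ((1-(y-(k:ℝ)))/(2-(y-k))) * D n (y-1) + (1/(2-(y-k))) * D n ((k:ℝ)+1)
            = D n ((k:ℝ)+1) + ((1-(y-k))/(2-(y-k))) * (D n (y-1) - D n ((k:ℝ)+1)) := by
          field_simp; ring
        rw [idx, idy]
        have hb1 : (1-(y-(k:ℝ)))/(2-(y-k)) ≤ (1-(x-k))/(2-(x-k)) := by
          rw [div_le_div_iff₀ hdy hdx]; nlinarith
        have hby0 : 0 ≤ (1-(y-(k:ℝ)))/(2-(y-k)) := div_nonneg (by linarith) hdy.le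
        have hhx : 0 ≤ D n (x-1) - D n ((k:ℝ)+1) :=
          sub_nonneg.2 (hanti _ _ (by linarith))
        have hhy : D n (y-1) - D n ((k:ℝ)+1) ≤ D n (x-1) - D n ((k:ℝ)+1) :=
          sub_le_sub_right (hanti _ _ (by linarith)) _
        have t1 : ((1-(y-(k:ℝ)))/(2-(y-k))) * (D n (y-1) - D n ((k:ℝ)+1))
            ≤ ((1-(y-k))/(2-(y-k))) * (D n (x-1) - D n ((k:ℝ)+1)) :=
          mul_le_mul_of_nonneg_left hhy hby0
        have t2 : ((1-(y-(k:ℝ)))/(2-(y-k))) * (D n (x-1) - D n ((k:ℝ)+1))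
            ≤ ((1-(x-k))/(2-(x-k))) * (D n (x-1) - D n ((k:ℝ)+1)) :=
          mul_le_mul_of_nonneg_right hb1 hhx
        linarith
      exact ⟨hC.congr hEq, fun x hx y hy hxy => by
        rw [hEq hx, hEq hy]; exact hA hx hy hxy⟩

end Piece2


open Set Topology Filter

theorem D_main (n : ℕ) :
    (∀ x y : ℝ, x ≤ y → D n y ≤ D n x) ∧
    (∀ x : ℝ, x ≤ 0 → D n x = 1) ∧
    (∀ x : ℝ, (n : ℝ) < x → D n x = 0) ∧
    (∀ x : ℝ, x ≠ (n : ℝ) → ContinuousAt (D n) x) ∧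
    ContinuousWithinAt (D n) (Set.Iic (n:ℝ)) (n:ℝ) := by
  induction n with
  | zero =>
    refine ⟨?_, fun x hx => D_of_nonpos 0 hx, fun x hx => D_of_gt 0 hx, ?_, ?_⟩
    · intro x y hxy
      by_cases hy : y ≤ 0
      · rw [D_of_nonpos 0 hy, D_of_nonpos 0 (hxy.trans hy)]
      · rw [D_of_gt 0 (by push_cast; linarith [not_le.1 hy])]
        exact D_nonneg 0 x
    · intro x hx
      rcases lt_or_gt_of_ne (by exact_mod_cast hx : x ≠ (0:ℝ)) with h | h
      · apply Filter.EventuallyEq.continuousAt (y := 1)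
        filter_upwards [Iio_mem_nhds h] with y hy
        exact D_of_nonpos 0 (le_of_lt hy)
      · apply Filter.EventuallyEq.continuousAt (y := 0)
        filter_upwards [Ioi_mem_nhds h] with y hy
        exact D_of_gt 0 (by exact_mod_cast hy)
    · apply continuousWithinAt_const.congr
      · intro y hy
        simp only [mem_Iic] at hy
        exact D_of_nonpos 0 (by exact_mod_cast hy)
      · exact D_of_nonpos 0 (by norm_num)
  | succ n ih =>
    obtain ⟨hanti, hone, hzero, hcont, hleft⟩ := ih
    have hleft' : ∀ x : ℝ, ContinuousWithinAt (D n) (Set.Iic x) x := by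
      intro x
      by_cases hx : x = (n:ℝ)
      · subst hx; exact hleft
      · exact (hcont x hx).continuousWithinAt
    have pieces := D_piece hanti hcont hleft'
    -- global antitone on [0, m+1]
    have hIcc : ∀ m : ℕ, m ≤ n → AntitoneOn (D (n+1)) (Icc (0:ℝ) ((m:ℝ)+1)) := by
      intro m
      induction m with
      | zero =>
        intro _
        have := (pieces 0 (by omega)).2
        norm_num at this ⊢
        exact this
      | succ m ihm =>
        intro hm
        have h1 := ihm (by omega)
        have h2 := (pieces (m+1) (by omega)).2
        push_cast at h2 ⊢
        rw [← Set.Icc_union_Icc_eq_Icc (by positivity : (0:ℝ) ≤ (m:ℝ)+1)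
          (by linarith : ((m:ℝ)+1) ≤ (m:ℝ)+1+1)]
        exact h1.union_right h2 (isGreatest_Icc (by positivity)) (isLeast_Icc (by linarith))
    have hIccAll : AntitoneOn (D (n+1)) (Icc (0:ℝ) ((n:ℝ)+1)) := hIcc n le_rfl
    have hone' : ∀ x : ℝ, x ≤ 0 → D (n+1) x = 1 := fun x hx => D_of_nonpos (n+1) hx
    have hzero' : ∀ x : ℝ, ((n+1:ℕ):ℝ) < x → D (n+1) x = 0 := fun x hx => D_of_gt (n+1) hx
    have hmem0 : (0:ℝ) ∈ Icc (0:ℝ) ((n:ℝ)+1) := ⟨le_rfl, by positivity⟩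
    have hanti' : ∀ x y : ℝ, x ≤ y → D (n+1) y ≤ D (n+1) x := by
      intro x y hxy
      by_cases hy0 : y ≤ 0
      · rw [D_of_nonpos _ hy0, D_of_nonpos _ (hxy.trans hy0)]
      push_neg at hy0
      by_cases hx0 : x ≤ 0
      · rw [D_of_nonpos _ hx0]
        by_cases hyn : (n:ℝ)+1 < y
        · rw [D_of_gt (n+1) (by push_cast; linarith)]; norm_num
        · have h := hIccAll hmem0 ⟨hy0.le, not_lt.1 hyn⟩ hy0.le
          rwa [D_of_nonpos _ le_rfl] at h
      push_neg at hx0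
      by_cases hxn : (n:ℝ)+1 < x
      · rw [D_of_gt (n+1) (by push_cast; linarith),
            D_of_gt (n+1) (by push_cast; linarith)]
      by_cases hyn : (n:ℝ)+1 < y
      · rw [D_of_gt (n+1) (by push_cast; linarith)]
        exact D_nonneg _ _
      · exact hIccAll ⟨hx0.le, not_lt.1 hxn⟩ ⟨(hx0.trans_le hxy).le, not_lt.1 hyn⟩ hxy
    refine ⟨hanti', hone', hzero', ?_, ?_⟩
    · -- continuity away from n+1
      intro x hx
      by_cases hx0 : x < 0
      · apply Filter.EventuallyEq.continuousAt (y := 1)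
        filter_upwards [Iio_mem_nhds hx0] with y hy
        exact D_of_nonpos (n+1) (le_of_lt hy)
      push_neg at hx0
      by_cases hxn : ((n:ℝ)+1) < x
      · apply Filter.EventuallyEq.continuousAt (y := 0)
        filter_upwards [Ioi_mem_nhds hxn] with y hy
        exact D_of_gt (n+1) (by push_cast; exact hy)
      push_neg at hxn
      have hxn' : x < (n:ℝ) + 1 := lt_of_le_of_ne hxn (by push_cast at hx; exact hx)
      rcases eq_or_lt_of_le hx0 with h0 | h0
      · -- x = 0
        rw [← h0]
        apply continuousAt_iff_continuous_left_right.2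
        constructor
        · apply continuousWithinAt_const.congr
          · intro y hy
            exact D_of_nonpos (n+1) hy
          · exact D_of_nonpos (n+1) le_rfl
        · have hcp := (pieces 0 (by omega)).1
          norm_num at hcp
          have := hcp 0 ⟨le_rfl, by norm_num⟩
          exact ContinuousWithinAt.mono_of_mem_nhdsWithin this (Icc_mem_nhdsGE_of_mem ⟨le_rfl, by norm_num⟩)
      -- now 0 < x < n+1
      by_cases hint : ∃ m : ℤ, x = (m:ℝ)
      · obtain ⟨m, rfl⟩ := hint
        have hm1 : 1 ≤ m := by exact_mod_cast h0
        have hmn : (m:ℝ) ≤ (n:ℝ) := by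
          have : (m:ℤ) < (n:ℤ) + 1 := by exact_mod_cast hxn'
          exact_mod_cast (by omega : m ≤ (n:ℤ))
        obtain ⟨j, rfl⟩ : ∃ j : ℕ, m = (j:ℤ) := ⟨m.toNat, by omega⟩
        have hj1 : 1 ≤ j := by exact_mod_cast hm1
        have hjn : j ≤ n := by exact_mod_cast hmn
        apply continuousAt_iff_continuous_left_right.2
        constructor
        · -- left: piece j-1
          have hcp := (pieces (j-1) (by omega)).1
          have hc1 : ((j-1:ℕ):ℝ) = (j:ℝ) - 1 := by
            push_cast [Nat.cast_sub hj1]; ring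
          rw [hc1] at hcp
          have hmem : ((j:ℤ):ℝ) ∈ Icc ((j:ℝ)-1) ((j:ℝ)-1+1) := by
            constructor <;> [push_cast; push_cast] <;> linarith
          have := hcp _ hmem
          apply ContinuousWithinAt.mono_of_mem_nhdsWithin this
          have : Icc ((j:ℝ)-1) ((j:ℝ)-1+1) ∈ 𝓝[≤] ((j:ℤ):ℝ) := by
            apply Icc_mem_nhdsLE_of_mem
            constructor <;> push_cast <;> [linarith; linarith]
          exact this
        · -- right: piece j
          have hcp := (pieces j hjn).1
          have hmem : ((j:ℤ):ℝ) ∈ Icc ((j:ℝ)) ((j:ℝ)+1) := by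
            constructor <;> push_cast <;> linarith
          have := hcp _ hmem
          apply ContinuousWithinAt.mono_of_mem_nhdsWithin this
          apply Icc_mem_nhdsGE_of_mem
          constructor <;> push_cast <;> linarith
      · -- non-integer
        set k : ℕ := ⌊x⌋.toNat with hkdef
        have hfl0 : 0 ≤ ⌊x⌋ := Int.floor_nonneg.2 hx0
        have hkx : ((k:ℕ):ℝ) = ((⌊x⌋:ℤ):ℝ) := by
          have h := Int.toNat_of_nonneg hfl0
          rw [hkdef]
          exact_mod_cast h
        have hklt : ((k:ℕ):ℝ) < x := by
          rw [hkx]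
          rcases eq_or_lt_of_le (Int.floor_le x) with h | h
          · exact absurd ⟨⌊x⌋, h.symm⟩ hint
          · exact h
        have hxlt : x < (k:ℝ) + 1 := by
          rw [hkx]; exact_mod_cast Int.lt_floor_add_one x
        have hkn : k ≤ n := by
          have h1 : ((k:ℕ):ℝ) < (n:ℝ) + 1 := lt_trans hklt hxn'
          have h2 : k < n + 1 := by exact_mod_cast h1
          omega
        exact ((pieces k hkn).1).continuousAt (Icc_mem_nhds hklt hxlt)
    · -- left continuity at n+1
      have hcp := (pieces n le_rfl).1
      have hpt : ((n+1:ℕ):ℝ) = (n:ℝ)+1 := by push_cast; ring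
      rw [hpt]
      have hmem : (n:ℝ)+1 ∈ Icc ((n:ℝ)) ((n:ℝ)+1) := ⟨by linarith, le_rfl⟩
      exact ContinuousWithinAt.mono_of_mem_nhdsWithin (hcp _ hmem) (Icc_mem_nhdsLE (by linarith))

/-- `D n` is nonincreasing, equals `1` on `(-∞, 0]`, equals `0` on
`(n, ∞)`, and is continuous at every point except `n`. -/
theorem D_antitone_boundary_continuous (n : ℕ) :
    (∀ x y : ℝ, x ≤ y → D n y ≤ D n x) ∧
    (∀ x : ℝ, x ≤ 0 → D n x = 1) ∧
    (∀ x : ℝ, (n : ℝ) < x → D n x = 0) ∧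
    (∀ x : ℝ, x ≠ (n : ℝ) → ContinuousAt (D n) x) := by
  obtain ⟨h1, h2, h3, h4, _⟩ := D_main n
  exact ⟨h1, h2, h3, h4⟩
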